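/- If λ ∈ ℂ satisfies Re λ ≥ 0 and (λ+α)(λ+δ) = β e^{-λτ}(1 - e^{-(λ+δ)l/f}) for real parameters α > 0, β, δ ∈ ℝ, l, f > 0, τ ≥ 0, then |λ| ≤ (|δ| + √(δ² + 8|β|))/2. -/

import Mathlib

open Complex

/-- Any characteristic root `λ` with `Re λ ≥ 0` satisfies
`|λ| ≤ (|δ| + √(δ² + 8|β|))/2`. -/
theorem eigenvalue_bound (α β δ l f τ : ℝ) (hα : 0 < α) (hδ : 0 ≤ δ)
    (hl : 0 < l) (hf : 0 < f) (hτ : 0 ≤ τ) (lam : ℂ) (hre : 0 ≤ lam.re)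
    (hroot : (lam + α) * (lam + δ) =
      (β : ℂ) * Complex.exp (-lam * τ) * (1 - Complex.exp (-(lam + δ) * l / f))) :
    ‖lam‖ ≤ (|δ| + Real.sqrt (δ ^ 2 + 8 * |β|)) / 2 := by
  set a := ‖lam‖ with ha
  -- bound on exponentials
  have he1 : ‖Complex.exp (-lam * τ)‖ ≤ 1 := by
    rw [Complex.norm_exp]
    apply Real.exp_le_one_iff.mpr
    simp only [neg_mul, neg_re, mul_re, ofReal_re, ofReal_im, mul_zero, sub_zero]
    nlinarith [lam.re * τ]
  have he2 : ‖Complex.exp (-(lam + δ) * l / f)‖ ≤ 1 := by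
    rw [Complex.norm_exp]
    apply Real.exp_le_one_iff.mpr
    have : ((-(lam + δ) * l / f)).re = -((lam.re + δ) * l) / f := by
      simp [div_re, add_re, add_im, mul_re, mul_im]
      field_simp
      ring
    rw [this]
    apply div_nonpos_of_nonpos_of_nonneg _ hf.le
    nlinarith
  have hb2 : ‖1 - Complex.exp (-(lam + δ) * l / f)‖ ≤ 2 := by
    calc ‖1 - Complex.exp (-(lam + δ) * l / f)‖
        ≤ ‖(1:ℂ)‖ + ‖Complex.exp (-(lam + δ) * l / f)‖ := by
          apply norm_sub_le
      _ ≤ 2 := by rw [norm_one]; linarith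
  have hprod : ‖lam + α‖ * ‖lam + δ‖ ≤ 2 * |β| := by
    rw [← norm_mul, hroot, norm_mul, norm_mul, Complex.norm_real, Real.norm_eq_abs]
    calc |β| * ‖Complex.exp (-lam * τ)‖ * ‖1 - Complex.exp (-(lam + δ) * l / f)‖
        ≤ |β| * 1 * 2 := by
          apply mul_le_mul _ hb2 (norm_nonneg _) (by positivity)
          exact mul_le_mul_of_nonneg_left he1 (abs_nonneg β)
      _ = 2 * |β| := by ring
  have hA : a ≤ ‖lam + α‖ := by
    rw [ha, Complex.norm_def, Complex.norm_def]
    apply Real.sqrt_le_sqrt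
    simp only [Complex.normSq_apply, add_re, add_im, ofReal_re, ofReal_im, add_zero]
    nlinarith
  have hD : a - |δ| ≤ ‖lam + δ‖ := by
    have := norm_add_le (lam + δ) (-(δ : ℂ))
    simp only [add_neg_cancel_right, norm_neg, Complex.norm_real, Real.norm_eq_abs] at this
    linarith
  have ha0 : 0 ≤ a := norm_nonneg _
  have haa : a * (a - |δ|) ≤ 2 * |β| := by
    rcases le_or_gt a |δ| with h | h
    · nlinarith [abs_nonneg β]
    · calc a * (a - |δ|) ≤ ‖lam + α‖ * ‖lam + δ‖ := by
            apply mul_le_mul hA hD (by linarith) (norm_nonneg _)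
        _ ≤ 2 * |β| := hprod
  set s := Real.sqrt (δ ^ 2 + 8 * |β|) with hs
  have hs0 : 0 ≤ s := Real.sqrt_nonneg _
  have hs2 : s ^ 2 = δ ^ 2 + 8 * |β| := by
    rw [hs, Real.sq_sqrt]; positivity
  have hsδ : |δ| ≤ s := by
    rw [hs]
    have : |δ| = Real.sqrt (δ ^ 2) := by
      rw [Real.sqrt_sq_eq_abs]
    rw [this]
    apply Real.sqrt_le_sqrt
    nlinarith [abs_nonneg β]
  by_contra h
  push_neg at h
  have habs : 0 ≤ |δ| := abs_nonneg δ
  nlinarith [_root_.sq_abs δ, mul_pos (show (0:ℝ) < 2*a - |δ| - s by linarith)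
    (show (0:ℝ) < 2*a - |δ| + s by linarith)]
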